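/- Let α ∈ (0, π/2), write c = cos(α), s = sin(α), let d ≥ 0 and 0 < r ≤ 1/7. Let w_r > 0 be defined by Φ(−w_r) = 2Φ(r) − 1, and set x₀ = (d + s·w_r)/c. Let C_r = {(x,y) ∈ ℝ² : x ≥ x₀ and cx + sy ≤ d + rs}. Then γ₂(C_r) ≤ (s/√(2π)) · exp(−(d+rs)²/2) · Φ(−(w_r − r))/(w_r − r). -/

import Mathlib

set_option maxHeartbeats 1000000


open MeasureTheory Set
open scoped Pointwise RealInnerProductSpace ENNReal Classical

/-- The standard Gaussian measure on `ℝ^d`, with density `(2π)^(-d/2) exp(-‖x‖²/2)`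
with respect to Lebesgue measure. -/
noncomputable def gaussD (d : ℕ) : Measure (EuclideanSpace ℝ (Fin d)) :=
  volume.withDensity fun x =>
    ENNReal.ofReal ((2 * Real.pi) ^ (-(d : ℝ) / 2) * Real.exp (-‖x‖ ^ 2 / 2))

/-- The standard Gaussian measure on `ℝ`. -/
noncomputable def gauss1 : Measure ℝ :=
  volume.withDensity fun t =>
    ENNReal.ofReal ((2 * Real.pi) ^ (-(1 : ℝ) / 2) * Real.exp (-t ^ 2 / 2))

/-- The slice `(K - y) ∩ ℝu`, viewed as a subset of `ℝ` via the isometry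
`t ↦ t • (u / ‖u‖)`. -/
def lineSlice {n : ℕ} (K : Set (EuclideanSpace ℝ (Fin n)))
    (u y : EuclideanSpace ℝ (Fin n)) : Set ℝ :=
  {t : ℝ | y + t • (‖u‖⁻¹ • u) ∈ K}

/-- `Z_B(K, u)`: the set of `y ∈ u^⊥` such that `(K - y) ∩ ℝu` has Euclidean length
at least `2‖u‖`. -/
noncomputable def ZB {n : ℕ} (K : Set (EuclideanSpace ℝ (Fin n)))
    (u : EuclideanSpace ℝ (Fin n)) : Set (EuclideanSpace ℝ (Fin n)) :=
  {y | ⟪y, u⟫ = 0 ∧ ENNReal.ofReal (2 * ‖u‖) ≤ volume (lineSlice K u y)}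

/-- Banaszczyk's transform `K * u = (K + [-u, u]) ∩ (Z_B + ℝu)`, with `K * 0 = K`. -/
noncomputable def bTransform {n : ℕ} (K : Set (EuclideanSpace ℝ (Fin n)))
    (u : EuclideanSpace ℝ (Fin n)) : Set (EuclideanSpace ℝ (Fin n)) :=
  if u = 0 then K
  else (K + segment ℝ (-u) u) ∩ (ZB K u + Set.range fun t : ℝ => t • u)

/-- `Z_K(u)`: the set of `y ∈ u^⊥` such that `γ₁((K - y) ∩ ℝu) ≥ γ₁([-‖u‖, ‖u‖])`. -/
noncomputable def ZG {n : ℕ} (K : Set (EuclideanSpace ℝ (Fin n)))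
    (u : EuclideanSpace ℝ (Fin n)) : Set (EuclideanSpace ℝ (Fin n)) :=
  {y | ⟪y, u⟫ = 0 ∧ gauss1 (Set.Icc (-‖u‖) ‖u‖) ≤ gauss1 (lineSlice K u y)}

/-- The Gaussian Banaszczyk transform `K ∘ u = (K + [-u, u]) ∩ (Z_K(u) + ℝu)`,
with `K ∘ 0 = K`. -/
noncomputable def gTransform {n : ℕ} (K : Set (EuclideanSpace ℝ (Fin n)))
    (u : EuclideanSpace ℝ (Fin n)) : Set (EuclideanSpace ℝ (Fin n)) :=
  if u = 0 then K
  else (K + segment ℝ (-u) u) ∩ (ZG K u + Set.range fun t : ℝ => t • u)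

/-- `Φ`, the cumulative distribution function of the standard Gaussian on `ℝ`. -/
noncomputable def Phi (t : ℝ) : ℝ := (gauss1 (Set.Iic t)).toReal

/-- `Φ⁻¹ : [0,1] → ℝ ∪ {±∞}`, the (extended-real-valued) inverse of `Φ`. -/
noncomputable def PhiInv (p : ℝ) : EReal :=
  sSup ((fun t : ℝ => (t : EReal)) '' {t : ℝ | Phi t ≤ p})


namespace ConeAux

open Real

lemma rpow_half' : ((2 * Real.pi) ^ (-(1 : ℝ) / 2)) = (Real.sqrt (2*Real.pi))⁻¹ := by
  rw [Real.sqrt_eq_rpow, ← Real.rpow_neg (by positivity), neg_div]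

lemma gauss1_eq : gauss1 = ProbabilityTheory.gaussianReal 0 1 := by
  rw [ProbabilityTheory.gaussianReal_of_var_ne_zero _ one_ne_zero]
  unfold gauss1
  congr 1
  ext x
  rw [ProbabilityTheory.gaussianPDF_def, ProbabilityTheory.gaussianPDFReal_def]
  rw [rpow_half']
  norm_num

instance : IsProbabilityMeasure gauss1 := by rw [gauss1_eq]; infer_instance

lemma gauss1_ne_top (s : Set ℝ) : gauss1 s ≠ ⊤ := measure_ne_top _ _

lemma gauss1_map_neg : gauss1.map (fun x => -x) = gauss1 := by
  rw [gauss1_eq]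
  have := ProbabilityTheory.gaussianReal_map_const_mul (μ := 0) (v := 1) (-1)
  simp only [neg_one_mul, mul_zero] at this
  simpa using this

lemma gauss1_Iic_neg (t : ℝ) : gauss1 (Iic (-t)) = gauss1 (Ici t) := by
  conv_lhs => rw [← gauss1_map_neg]
  rw [Measure.map_apply measurable_neg measurableSet_Iic]
  congr 1
  ext x
  simp [neg_le_neg_iff]

lemma gauss1_singleton (t : ℝ) : gauss1 {t} = 0 := by
  unfold gauss1
  exact withDensity_absolutelyContinuous _ _ (volume_singleton)

lemma Phi_neg_eq (t : ℝ) : Phi (-t) = 1 - Phi t := by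
  have h1 : gauss1 (Iic (-t)) = gauss1 (Ioi t) := by
    rw [gauss1_Iic_neg, ← Set.Ici_sdiff_left]
    exact (measure_diff_null (gauss1_singleton t)).symm
  have h2 : gauss1 (Iic t) + gauss1 (Ioi t) = 1 := by
    rw [← measure_union (by simp [disjoint_left]) measurableSet_Ioi, Iic_union_Ioi,
      measure_univ]
  unfold Phi
  rw [h1]
  have ht := gauss1_ne_top (Iic t)
  have ht' := gauss1_ne_top (Ioi t)
  have := congrArg ENNReal.toReal h2
  rw [ENNReal.toReal_add ht ht'] at this
  simp only [ENNReal.toReal_one] at this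
  linarith

lemma Phi_mono : Monotone Phi := fun a b h => by
  unfold Phi
  exact ENNReal.toReal_mono (gauss1_ne_top _) (measure_mono (Iic_subset_Iic.mpr h))

lemma Phi_zero : Phi 0 = 1/2 := by have := Phi_neg_eq 0; rw [neg_zero] at this; linarith

lemma Phi_nonneg (t : ℝ) : 0 ≤ Phi t := ENNReal.toReal_nonneg

lemma Phi_le (t : ℝ) (ht : 0 ≤ t) : Phi t ≤ 1/2 + t * (Real.sqrt (2*Real.pi))⁻¹ := by
  have hsplit : gauss1 (Iic t) = gauss1 (Iic 0) + gauss1 (Ioc 0 t) := by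
    rw [← measure_union (by simp [disjoint_left]; intros; linarith) measurableSet_Ioc,
      Iic_union_Ioc_eq_Iic ht]
  have hb : gauss1 (Ioc 0 t) ≤ ENNReal.ofReal ((Real.sqrt (2*Real.pi))⁻¹) * ENNReal.ofReal t := by
    unfold gauss1
    rw [withDensity_apply _ measurableSet_Ioc]
    calc ∫⁻ x in Ioc 0 t, ENNReal.ofReal ((2 * Real.pi) ^ (-(1 : ℝ) / 2) * Real.exp (-x ^ 2 / 2))
        ≤ ∫⁻ _ in Ioc 0 t, ENNReal.ofReal ((Real.sqrt (2*Real.pi))⁻¹) := by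
          refine lintegral_mono fun x => ENNReal.ofReal_le_ofReal ?_
          rw [rpow_half']
          nlinarith [Real.exp_le_one_iff.mpr (by nlinarith [sq_nonneg x] : -x^2/2 ≤ 0),
            Real.exp_pos (-x^2/2), inv_nonneg.mpr (Real.sqrt_nonneg (2*Real.pi))]
      _ = ENNReal.ofReal ((Real.sqrt (2*Real.pi))⁻¹) * ENNReal.ofReal t := by
          rw [setLIntegral_const, Real.volume_Ioc]
          simp
  unfold Phi
  rw [hsplit, ENNReal.toReal_add (gauss1_ne_top _) (gauss1_ne_top _)]
  have h0 : (gauss1 (Iic 0)).toReal = 1/2 := Phi_zero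
  rw [h0]
  gcongr
  calc (gauss1 (Ioc 0 t)).toReal
      ≤ (ENNReal.ofReal ((Real.sqrt (2*Real.pi))⁻¹) * ENNReal.ofReal t).toReal :=
        ENNReal.toReal_mono (by finiteness) hb
    _ = (Real.sqrt (2*Real.pi))⁻¹ * t := by
        rw [ENNReal.toReal_mul, ENNReal.toReal_ofReal (by positivity), ENNReal.toReal_ofReal ht]
    _ = t * (Real.sqrt (2*Real.pi))⁻¹ := mul_comm _ _

lemma w_gt_r {r w : ℝ} (hr0 : 0 < r) (hr : r ≤ 1/7) (hw : 0 < w)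
    (hwdef : Phi (-w) = 2 * Phi r - 1) : r < w := by
  by_contra h
  push_neg at h
  clear hw
  have h1 : Phi w ≤ Phi r := Phi_mono h
  have h2 : Phi (-w) = 1 - Phi w := Phi_neg_eq w
  have h3 : Phi r ≤ 1/2 + (1/7) * (Real.sqrt (2*Real.pi))⁻¹ := by
    calc Phi r ≤ Phi (1/7) := Phi_mono hr
      _ ≤ _ := Phi_le _ (by norm_num)
  have hs : (6:ℝ)/7 < Real.sqrt (2*Real.pi) := by
    rw [show (6:ℝ)/7 = Real.sqrt ((6/7)^2) by rw [Real.sqrt_sq (by norm_num)]]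
    apply Real.sqrt_lt_sqrt (by positivity)
    nlinarith [Real.pi_gt_three]
  have hp : (0:ℝ) < Real.sqrt (2*Real.pi) := by positivity
  have hinv : Real.sqrt (2*Real.pi) * (Real.sqrt (2*Real.pi))⁻¹ = 1 := mul_inv_cancel₀ (ne_of_gt hp)
  have hipos : (0:ℝ) < (Real.sqrt (2*Real.pi))⁻¹ := by positivity
  nlinarith [mul_pos hipos (sub_pos.mpr hs)]

lemma prod_bound (c s b x₀ a : ℝ) (hc : 0 < c) (hs : 0 < s) (hb : 0 ≤ b) (hx₀ : b ≤ x₀)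
    (ha : 0 < a) (hcx₀ : c * x₀ = b + s * a) :
    ∫⁻ z : ℝ × ℝ, ({q : ℝ × ℝ | x₀ ≤ q.1 ∧ c * q.1 + s * q.2 ≤ b}).indicator
        (fun q => ENNReal.ofReal ((2*Real.pi)⁻¹ * Real.exp (-(q.1^2 + q.2^2)/2))) z
      ≤ ENNReal.ofReal ((Real.sqrt (2*Real.pi))⁻¹ * Real.exp (-x₀^2/2) * (x₀ + a*c/s)⁻¹)
          * gauss1 (Iic (-a)) := by
  have hx₀pos : 0 < x₀ := by nlinarith
  set lam : ℝ := x₀ + a*c/s with hlam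
  clear_value lam
  have hl : 0 < lam := by rw [hlam]; positivity
  set D : ℝ := (Real.sqrt (2*Real.pi))⁻¹ * Real.exp (-x₀^2/2) with hD
  clear_value D
  have hD0 : 0 ≤ D := by rw [hD]; positivity
  set T : Set (ℝ × ℝ) := {q : ℝ × ℝ | x₀ ≤ q.1 ∧ c * q.1 + s * q.2 ≤ b} with hTdef
  set g : ℝ × ℝ → ℝ≥0∞ :=
    fun q => ENNReal.ofReal ((2*Real.pi)⁻¹ * Real.exp (-(q.1^2 + q.2^2)/2)) with hgdef
  have hT : MeasurableSet T := by
    have : T = {q : ℝ × ℝ | x₀ ≤ q.1} ∩ {q : ℝ × ℝ | c * q.1 + s * q.2 ≤ b} := rfl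
    rw [this]
    exact (measurableSet_le measurable_const measurable_fst).inter
      (measurableSet_le ((measurable_fst.const_mul c).add (measurable_snd.const_mul s))
        measurable_const)
  have hg : Measurable g := by fun_prop
  have hdens : Measurable (fun z : ℝ =>
      ENNReal.ofReal ((2 * Real.pi) ^ (-(1 : ℝ) / 2) * Real.exp (-z ^ 2 / 2))) := by fun_prop
  rw [MeasureTheory.Measure.volume_eq_prod, lintegral_prod _ ((hg.indicator hT).aemeasurable)]
  rw [← lintegral_add_right_eq_self (fun x => ∫⁻ y, T.indicator g (x, y)) x₀]
  have inner_bound : ∀ u : ℝ, (∫⁻ y, T.indicator g (u + x₀, y)) ≤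
      (Ici (0:ℝ)).indicator (fun u => ENNReal.ofReal (D * Real.exp (-(lam * u)))) u
        * gauss1 (Iic (-a)) := by
    intro u
    by_cases hu : 0 ≤ u
    · rw [indicator_of_mem (mem_Ici.mpr hu)]
      set t : ℝ := c/s*u with ht
      clear_value t
      have ht0 : 0 ≤ t := by rw [ht]; positivity
      have hst : s * t = c * u := by rw [ht]; field_simp
      have shift : (∫⁻ y, T.indicator g (u + x₀, y)) = ∫⁻ z, T.indicator g (u + x₀, z + -t) :=
        (lintegral_add_right_eq_self (fun y => T.indicator g (u + x₀, y)) (-t)).symm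
      rw [shift]
      have hptwise : ∀ z : ℝ, T.indicator g (u + x₀, z + -t) ≤
          ENNReal.ofReal (D * Real.exp (-(lam * u))) *
            (Iic (-a)).indicator (fun z => ENNReal.ofReal
              ((2 * Real.pi) ^ (-(1 : ℝ) / 2) * Real.exp (-z ^ 2 / 2))) z := by
        intro z
        by_cases hz : (u + x₀, z + -t) ∈ T
        · have h1 : x₀ ≤ u + x₀ := hz.1
          have h2 : c * (u + x₀) + s * (z + -t) ≤ b := hz.2
          have hzle : z ≤ -a := by
            have h3 : s * z ≤ s * (-a) := by nlinarith
            exact le_of_mul_le_mul_left (by linarith) hs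
          rw [indicator_of_mem hz, indicator_of_mem (mem_Iic.mpr hzle)]
          rw [← ENNReal.ofReal_mul (by positivity)]
          apply ENNReal.ofReal_le_ofReal
          rw [rpow_half']
          have hsq : Real.sqrt (2*Real.pi) * Real.sqrt (2*Real.pi) = 2*Real.pi :=
            Real.mul_self_sqrt (by positivity)
          have hexp : Real.exp (-((u+x₀)^2 + (z + -t)^2)/2)
              ≤ Real.exp (-x₀^2/2) * Real.exp (-(lam * u)) * Real.exp (-z^2/2) := by
            rw [← Real.exp_add, ← Real.exp_add, Real.exp_le_exp]
            have e1 : x₀^2 + 2*lam*u + z^2 ≤ (u+x₀)^2 + (z + -t)^2 := by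
              have h4 : 0 ≤ t * (-z - a) := mul_nonneg ht0 (by linarith)
              have h6 : 2*lam*u = 2*x₀*u + 2*(a*t) := by rw [hlam, ht]; ring
              nlinarith [sq_nonneg u, sq_nonneg t, h4, h6]
            nlinarith [e1]
          have hexp0 := Real.exp_pos (-((u+x₀)^2 + (z + -t)^2)/2)
          have hinv : (0:ℝ) < (Real.sqrt (2*Real.pi))⁻¹ := by positivity
          calc (2*Real.pi)⁻¹ * Real.exp (-((u + x₀) ^ 2 + (z + -t) ^ 2) / 2)
              = (Real.sqrt (2*Real.pi))⁻¹ * (Real.sqrt (2*Real.pi))⁻¹ *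
                  Real.exp (-((u+x₀)^2 + (z + -t)^2)/2) := by
                rw [← mul_inv, hsq]
            _ ≤ (Real.sqrt (2*Real.pi))⁻¹ * (Real.sqrt (2*Real.pi))⁻¹ *
                  (Real.exp (-x₀^2/2) * Real.exp (-(lam * u)) * Real.exp (-z^2/2)) := by
                have : -((u + x₀) ^ 2 + (z + -t) ^ 2) / 2 = -((u+x₀)^2 + (z + -t)^2)/2 := by ring
                rw [this]
                exact mul_le_mul_of_nonneg_left hexp (by positivity)
            _ = D * Real.exp (-(lam * u)) * ((Real.sqrt (2*Real.pi))⁻¹ * Real.exp (-z^2/2)) := by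
                rw [hD]; ring
        · rw [indicator_of_notMem hz]; exact zero_le
      calc ∫⁻ z, T.indicator g (u + x₀, z + -t) ≤
          ∫⁻ z, ENNReal.ofReal (D * Real.exp (-(lam * u))) *
            (Iic (-a)).indicator (fun z => ENNReal.ofReal
              ((2 * Real.pi) ^ (-(1 : ℝ) / 2) * Real.exp (-z ^ 2 / 2))) z :=
            lintegral_mono hptwise
        _ = ENNReal.ofReal (D * Real.exp (-(lam * u))) * gauss1 (Iic (-a)) := by
            rw [lintegral_const_mul _ (hdens.indicator measurableSet_Iic),
              lintegral_indicator measurableSet_Iic]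
            congr 1
            rw [gauss1, withDensity_apply _ measurableSet_Iic]
    · have hzero : ∀ y : ℝ, T.indicator g (u + x₀, y) = 0 := by
        intro y
        apply indicator_of_notMem
        intro hmem
        have h1 : x₀ ≤ u + x₀ := hmem.1
        exact hu (by linarith)
      rw [indicator_of_notMem (fun h => hu (mem_Ici.mp h))]
      simp [hzero]
  calc (∫⁻ u, ∫⁻ y, T.indicator g (u + x₀, y))
      ≤ ∫⁻ u, (Ici (0:ℝ)).indicator
          (fun u => ENNReal.ofReal (D * Real.exp (-(lam * u)))) u * gauss1 (Iic (-a)) :=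
        lintegral_mono inner_bound
    _ = (∫⁻ u in Ici (0:ℝ), ENNReal.ofReal (D * Real.exp (-(lam * u)))) * gauss1 (Iic (-a)) := by
        rw [lintegral_mul_const _ ((by fun_prop : Measurable fun u : ℝ =>
            ENNReal.ofReal (D * Real.exp (-(lam * u)))).indicator measurableSet_Ici),
          lintegral_indicator measurableSet_Ici]
    _ = ENNReal.ofReal (D * lam⁻¹) * gauss1 (Iic (-a)) := by
        congr 1
        rw [← setLIntegral_congr Ioi_ae_eq_Ici]
        have hInt : IntegrableOn (fun u : ℝ => D * Real.exp (-(lam * u))) (Ioi 0) := by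
          have := (exp_neg_integrableOn_Ioi 0 hl).const_mul D
          simpa [neg_mul, IntegrableOn] using this
        rw [← ofReal_integral_eq_lintegral_ofReal hInt
          (Filter.Eventually.of_forall fun u => by positivity)]
        congr 1
        rw [MeasureTheory.integral_const_mul]
        congr 1
        have := integral_comp_mul_left_Ioi (fun x => Real.exp (-x)) 0 hl
        simp only [mul_zero, integral_exp_neg_Ioi, neg_zero, Real.exp_zero, smul_eq_mul,
          mul_one] at this
        exact this

end ConeAux

open ConeAux in
/-- The Gaussian measure of the cone
`C_r = {(x, y) : x ≥ x₀, x cos α + y sin α ≤ d + r sin α}` (with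
`x₀ = (d + w_r sin α)/cos α`) is at most
`(sin α / √(2π)) exp(-(d + r sin α)²/2) Φ(-(w_r - r)) / (w_r - r)`. -/
theorem cone_measure_le (α : ℝ) (hα : α ∈ Set.Ioo 0 (Real.pi / 2))
    (d : ℝ) (hd : 0 ≤ d) (r : ℝ) (hr0 : 0 < r) (hr : r ≤ 1 / 7)
    (w : ℝ) (hw : 0 < w) (hwdef : Phi (-w) = 2 * Phi r - 1) :
    gaussD 2 {p : EuclideanSpace ℝ (Fin 2) |
        (d + Real.sin α * w) / Real.cos α ≤ p 0 ∧
        Real.cos α * p 0 + Real.sin α * p 1 ≤ d + r * Real.sin α}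
      ≤ ENNReal.ofReal (Real.sin α / Real.sqrt (2 * Real.pi) *
          Real.exp (-(d + r * Real.sin α) ^ 2 / 2) *
          (Phi (-(w - r)) / (w - r))) := by
  obtain ⟨hα0, hα2⟩ := hα
  have hπ := Real.pi_pos
  have hc : 0 < Real.cos α := Real.cos_pos_of_mem_Ioo ⟨by linarith, hα2⟩
  have hsin : 0 < Real.sin α := Real.sin_pos_of_pos_of_lt_pi hα0 (by linarith)
  have hc1 : Real.cos α ≤ 1 := Real.cos_le_one α
  have hcs : Real.sin α ^ 2 + Real.cos α ^ 2 = 1 := Real.sin_sq_add_cos_sq α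
  have hwr : r < w := w_gt_r hr0 hr hw hwdef
  set c : ℝ := Real.cos α with hcdef
  set s : ℝ := Real.sin α with hsdef
  set b : ℝ := d + r * s with hbdef
  set x₀ : ℝ := (d + s * w) / c with hx₀def
  set a : ℝ := w - r with hadef
  have ha : 0 < a := by rw [hadef]; linarith
  have hb0 : 0 ≤ b := by rw [hbdef]; positivity
  have hcx₀ : c * x₀ = b + s * a := by
    rw [hx₀def, hbdef, hadef]
    field_simp
    ring
  have hx₀b : b ≤ x₀ := by
    rw [hx₀def, le_div_iff₀ hc]
    rw [hbdef]
    nlinarith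
  -- the set and its measurability
  set S : Set (EuclideanSpace ℝ (Fin 2)) :=
    {p : EuclideanSpace ℝ (Fin 2) | x₀ ≤ p 0 ∧ c * p 0 + s * p 1 ≤ b} with hSdef
  have hmeas : MeasurableSet S := by
    have : S = {p : EuclideanSpace ℝ (Fin 2) | x₀ ≤ p 0} ∩
        {p : EuclideanSpace ℝ (Fin 2) | c * p 0 + s * p 1 ≤ b} := rfl
    rw [this]
    have m0 : Measurable fun p : EuclideanSpace ℝ (Fin 2) => p 0 := (measurable_pi_apply 0).comp (WithLp.measurable_ofLp 2 _)
    have m1 : Measurable fun p : EuclideanSpace ℝ (Fin 2) => p 1 := (measurable_pi_apply 1).comp (WithLp.measurable_ofLp 2 _)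
    exact (measurableSet_le measurable_const m0).inter
      (measurableSet_le ((m0.const_mul c).add (m1.const_mul s)) measurable_const)
  -- density function on EuclideanSpace
  set fE : EuclideanSpace ℝ (Fin 2) → ℝ≥0∞ :=
    fun p => ENNReal.ofReal ((2 * Real.pi)⁻¹ * Real.exp (-‖p‖ ^ 2 / 2)) with hfEdef
  have hfE : Measurable fE := by
    apply Measurable.ennreal_ofReal
    exact (continuous_const.mul ((continuous_norm.pow 2).neg.div_const 2).rexp).measurable
  have hc2 : (2 * Real.pi) ^ (-((2:ℕ) : ℝ) / 2) = (2 * Real.pi)⁻¹ := by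
    rw [show -((2:ℕ) : ℝ) / 2 = (-1 : ℝ) by norm_num, Real.rpow_neg_one]
  have hgd : gaussD 2 S = ∫⁻ p, S.indicator fE p := by
    rw [gaussD, withDensity_apply _ hmeas, ← lintegral_indicator hmeas]
    simp only [hc2, hfEdef]
  -- transport to ℝ × ℝ
  set φ : ℝ × ℝ → EuclideanSpace ℝ (Fin 2) :=
    fun z => (MeasurableEquiv.toLp 2 (Fin 2 → ℝ))
      (MeasurableEquiv.finTwoArrow.symm z) with hφdef
  have hφ : MeasurePreserving φ volume volume :=
    ((EuclideanSpace.volume_preserving_symm_measurableEquiv_toLp (Fin 2)).symm).comp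
      (volume_preserving_finTwoArrow ℝ).symm
  have htrans : (∫⁻ p, S.indicator fE p) = ∫⁻ z : ℝ × ℝ, S.indicator fE (φ z) :=
    (hφ.lintegral_comp (hfE.indicator hmeas)).symm
  have hcoord0 : ∀ z : ℝ × ℝ, (φ z) 0 = z.1 := by
    intro z
    simp [hφdef, MeasurableEquiv.toLp_apply, MeasurableEquiv.finTwoArrow]
  have hcoord1 : ∀ z : ℝ × ℝ, (φ z) 1 = z.2 := by
    intro z
    simp [hφdef, MeasurableEquiv.toLp_apply, MeasurableEquiv.finTwoArrow]
  have hnorm : ∀ z : ℝ × ℝ, ‖φ z‖ ^ 2 = z.1 ^ 2 + z.2 ^ 2 := by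
    intro z
    rw [EuclideanSpace.norm_eq, Real.sq_sqrt (by positivity)]
    simp [hφdef, Fin.sum_univ_two, MeasurableEquiv.toLp_apply,
      MeasurableEquiv.finTwoArrow, sq_abs]
  have hpt : ∀ z : ℝ × ℝ, S.indicator fE (φ z) =
      ({q : ℝ × ℝ | x₀ ≤ q.1 ∧ c * q.1 + s * q.2 ≤ b}).indicator
        (fun q => ENNReal.ofReal ((2 * Real.pi)⁻¹ * Real.exp (-(q.1 ^ 2 + q.2 ^ 2) / 2))) z := by
    intro z
    by_cases hzS : φ z ∈ S
    · rw [indicator_of_mem hzS, indicator_of_mem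
        (show z ∈ {q : ℝ × ℝ | x₀ ≤ q.1 ∧ c * q.1 + s * q.2 ≤ b} from
          ⟨by rw [← hcoord0 z]; exact hzS.1,
           by rw [← hcoord0 z, ← hcoord1 z]; exact hzS.2⟩)]
      rw [hfEdef]
      simp only
      rw [hnorm z]
    · rw [indicator_of_notMem hzS, indicator_of_notMem]
      intro hmem
      exact hzS ⟨by rw [hcoord0 z]; exact hmem.1,
        by rw [hcoord0 z, hcoord1 z]; exact hmem.2⟩
  have hbound := prod_bound c s b x₀ a hc hsin hb0 hx₀b ha hcx₀
  rw [hgd, htrans, lintegral_congr hpt]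
  refine le_trans hbound ?_
  -- finish: convert to the stated bound
  have hPhi : gauss1 (Iic (-a)) = ENNReal.ofReal (Phi (-a)) :=
    (ENNReal.ofReal_toReal (gauss1_ne_top _)).symm
  rw [hPhi, ← ENNReal.ofReal_mul (by positivity)]
  apply ENNReal.ofReal_le_ofReal
  -- real-number inequality
  set lam : ℝ := x₀ + a * c / s with hlamdef
  have hx₀pos : 0 < x₀ := by
    rw [hx₀def]
    apply div_pos _ hc
    nlinarith
  have hl : 0 < lam := by rw [hlamdef]; positivity
  have hcx0' : c * x₀ = d + s * w := by
    rw [hx₀def]; field_simp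
  have key : a ≤ s * lam := by
    have hslam : s * lam = s * x₀ + a * c := by rw [hlamdef]; field_simp
    rw [hslam]
    have haw : a ≤ w := by rw [hadef]; linarith
    have h1 : c * (s * x₀) = s * d + s ^ 2 * w := by
      have hh : c * (s * x₀) = s * (c * x₀) := by ring
      rw [hh, hcx0']; ring
    have h2' : s ^ 2 * a ≤ s ^ 2 * w := mul_le_mul_of_nonneg_left haw (sq_nonneg s)
    have h3' : s ^ 2 * w ≤ c * (s * x₀) := by
      rw [h1]
      have := mul_nonneg hsin.le hd
      linarith
    have hcs_a : a * s ^ 2 + a * c ^ 2 = a := by linear_combination a * hcs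
    have h5' : 0 ≤ c * (s * x₀) + a * c ^ 2 - a * c := by
      nlinarith [mul_nonneg ha.le (sub_nonneg.mpr hc1)]
    nlinarith [h5', hc]
  have h2 : lam⁻¹ ≤ s * a⁻¹ := by
    rw [show s * a⁻¹ = s / a from (div_eq_mul_inv s a).symm, inv_eq_one_div,
      div_le_div_iff₀ hl ha]
    linarith
  have e1 : Real.exp (-x₀ ^ 2 / 2) ≤ Real.exp (-b ^ 2 / 2) := by
    rw [Real.exp_le_exp]
    nlinarith
  have hPhin : 0 ≤ Phi (-a) := Phi_nonneg _
  have hE2 : (0:ℝ) ≤ Real.exp (-b ^ 2 / 2) := (Real.exp_pos _).le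
  have hrt : (0:ℝ) < Real.sqrt (2 * Real.pi) := by positivity
  have main : (Real.sqrt (2 * Real.pi))⁻¹ * Real.exp (-x₀ ^ 2 / 2) * lam⁻¹ * Phi (-a)
      ≤ (Real.sqrt (2 * Real.pi))⁻¹ * Real.exp (-b ^ 2 / 2) * (s * a⁻¹) * Phi (-a) := by
    have hmul : Real.exp (-x₀ ^ 2 / 2) * lam⁻¹ ≤ Real.exp (-b ^ 2 / 2) * (s * a⁻¹) :=
      mul_le_mul e1 h2 (inv_nonneg.mpr hl.le) hE2
    have := mul_le_mul_of_nonneg_right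
      (mul_le_mul_of_nonneg_left hmul (inv_nonneg.mpr hrt.le)) hPhin
    calc (Real.sqrt (2 * Real.pi))⁻¹ * Real.exp (-x₀ ^ 2 / 2) * lam⁻¹ * Phi (-a)
        = (Real.sqrt (2 * Real.pi))⁻¹ * (Real.exp (-x₀ ^ 2 / 2) * lam⁻¹) * Phi (-a) := by ring
      _ ≤ (Real.sqrt (2 * Real.pi))⁻¹ * (Real.exp (-b ^ 2 / 2) * (s * a⁻¹)) * Phi (-a) := this
      _ = (Real.sqrt (2 * Real.pi))⁻¹ * Real.exp (-b ^ 2 / 2) * (s * a⁻¹) * Phi (-a) := by ring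
  calc (Real.sqrt (2 * Real.pi))⁻¹ * Real.exp (-x₀ ^ 2 / 2) * (x₀ + a * c / s)⁻¹ * Phi (-a)
      = (Real.sqrt (2 * Real.pi))⁻¹ * Real.exp (-x₀ ^ 2 / 2) * lam⁻¹ * Phi (-a) := by
        rw [hlamdef]
    _ ≤ (Real.sqrt (2 * Real.pi))⁻¹ * Real.exp (-b ^ 2 / 2) * (s * a⁻¹) * Phi (-a) := main
    _ = s / Real.sqrt (2 * Real.pi) * Real.exp (-b ^ 2 / 2) * (Phi (-a) / a) := by ring
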